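/- Let 𝒮 be a triangulated category admitting a bounded t-structure, and let G be an object of 𝒮 with fd(𝒮, G) < ∞. Then G is a classical generator of 𝒮, i.e. 𝒮 = ⟨G⟩. -/
import Mathlib


open CategoryTheory Limits Pretriangulated

universe v u

namespace Paper

variable (C : Type u) [Category.{v} C] [HasZeroObject C] [HasShift C ℤ]
  [Preadditive C] [∀ n : ℤ, (shiftFunctor C n).Additive] [Pretriangulated C]

/-- `Z` is a direct sum of `X` and `Y`. -/
def IsDirSum {C : Type u} [Category.{v} C] [Preadditive C] (Z X Y : C) : Prop :=
  ∃ (i₁ : X ⟶ Z) (i₂ : Y ⟶ Z) (p₁ : Z ⟶ X) (p₂ : Z ⟶ Y),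
    i₁ ≫ p₁ = 𝟙 X ∧ i₂ ≫ p₂ = 𝟙 Y ∧ i₁ ≫ p₂ = 0 ∧ i₂ ≫ p₁ = 0 ∧
    p₁ ≫ i₁ + p₂ ≫ i₂ = 𝟙 Z

/-- The extension `A * B` of two classes of objects. -/
def star (A B : Set C) : Set C :=
  {Z | ∃ (X Y : C) (f : X ⟶ Z) (g : Z ⟶ Y) (h : Y ⟶ (X⟦(1:ℤ)⟧ : C)),
      X ∈ A ∧ Y ∈ B ∧ Triangle.mk f g h ∈ distTriang C}

/-- Closure of a class of objects under finite direct sums and isomorphism. -/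
inductive addClos (A : Set C) : C → Prop
  | of {X Y : C} (e : X ≅ Y) (hY : Y ∈ A) : addClos A X
  | zero {X : C} (hX : IsZero X) : addClos A X
  | dirSum {Z X Y : C} (hX : addClos A X) (hY : addClos A Y) (h : IsDirSum Z X Y) :
      addClos A Z

/-- `coprodN A n` is `coprod_n (A)`; by convention `coprodN A 0` consists of zero objects. -/
def coprodN (A : Set C) : ℕ → Set C
  | 0 => {X | IsZero X}
  | 1 => setOf (addClos C A)
  | (n+2) => star C (setOf (addClos C A)) (coprodN A (n+1))

/-- Direct summands of objects in `A`. -/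
def smd (A : Set C) : Set C := {X | ∃ (Z Y : C), Z ∈ A ∧ IsDirSum Z X Y}

/-- The class `G[I] = {G[-i] : i ∈ I}` (up to isomorphism). -/
def shiftsOf (G : C) (I : Set ℤ) : Set C :=
  {X | ∃ i ∈ I, Nonempty (X ≅ (G⟦(-i : ℤ)⟧ : C))}

/-- `⟨G⟩ₙ^I := smd (coprodₙ (G[I]))`. -/
def genN (G : C) (I : Set ℤ) (n : ℕ) : Set C := smd C (coprodN C (shiftsOf C G I) n)

/-- `⟨G⟩^I := ⋃_{n > 0} ⟨G⟩ₙ^I`. -/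
def gen (G : C) (I : Set ℤ) : Set C := {X | ∃ n : ℕ, X ∈ genN C G I (n+1)}

/-- The right orthogonal `G[I]^⊥`. -/
def rPerpShifts (G : C) (I : Set ℤ) : Set C :=
  {Y | ∀ i ∈ I, ∀ f : (G⟦(-i : ℤ)⟧ : C) ⟶ Y, f = 0}

/-- `fd(𝒮, G) ≤ m` : `G(-∞,-1]^⊥ ⊆ ⟨G⟩^{[0,∞)}[m] = ⟨G⟩^{[-m,∞)}`. -/
def fdLE (G : C) (m : ℤ) : Prop :=
  ∀ X ∈ rPerpShifts C G (Set.Iic (-1)), X ∈ gen C G (Set.Ici (-m))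

/-- `fd(𝒮ᵒᵖ, Gᵒᵖ) ≤ m`, expressed inside `𝒮`. -/
def fdOpLE (G : C) (m : ℤ) : Prop :=
  ∀ X : C, (∀ j : ℤ, j ≤ -1 → ∀ f : X ⟶ (G⟦j⟧ : C), f = 0) →
    X ∈ gen C G (Set.Iic m)

/-- A t-structure on `C`, given by its aisle `le = 𝒮^{≤0}` and coaisle `ge = 𝒮^{≥0}`. -/
structure TStructure where
  le : Set C
  ge : Set C
  le_iso : ∀ ⦃X Y : C⦄, (X ≅ Y) → X ∈ le → Y ∈ le
  ge_iso : ∀ ⦃X Y : C⦄, (X ≅ Y) → X ∈ ge → Y ∈ ge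
  le_shift : ∀ X ∈ le, (X⟦(1:ℤ)⟧ : C) ∈ le
  ge_shift : ∀ X ∈ ge, (X⟦(-1:ℤ)⟧ : C) ∈ ge
  hom_zero : ∀ X ∈ le, ∀ Y ∈ ge, ∀ f : (X⟦(1:ℤ)⟧ : C) ⟶ Y, f = 0
  triangle : ∀ X : C, ∃ (A B : C) (_ : A ∈ le) (_ : B ∈ ge)
      (f : ((A⟦(1:ℤ)⟧ : C)) ⟶ X) (g : X ⟶ B) (h : B ⟶ ((A⟦(1:ℤ)⟧ : C)⟦(1:ℤ)⟧)),
      Triangle.mk f g h ∈ distTriang C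

variable {C}

/-- bounded above: `𝒮 = ⋃ₙ 𝒮^{≤n}`. -/
def TStructure.BoundedAbove (T : TStructure C) : Prop :=
  ∀ X : C, ∃ n : ℕ, (X⟦(n : ℤ)⟧ : C) ∈ T.le

/-- bounded below: `𝒮 = ⋃ₙ 𝒮^{≥-n}`. -/
def TStructure.BoundedBelow (T : TStructure C) : Prop :=
  ∀ X : C, ∃ n : ℕ, (X⟦(-(n : ℤ))⟧ : C) ∈ T.ge

/-- bounded t-structure. -/
def TStructure.Bounded (T : TStructure C) : Prop :=
  T.BoundedAbove ∧ T.BoundedBelow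

/-- A good metric on `C`. -/
structure IsGoodMetric (M : ℕ → Set C) : Prop where
  zero_mem : ∀ n : ℕ, ∀ X : C, IsZero X → X ∈ M n
  ext : ∀ n : ℕ, star C (M n) (M n) ⊆ M n
  shift_neg : ∀ n : ℕ, ∀ X ∈ M (n+1), (X⟦(-1:ℤ)⟧ : C) ∈ M n
  mono : ∀ n : ℕ, ∀ X ∈ M (n+1), X ∈ M n
  shift_pos : ∀ n : ℕ, ∀ X ∈ M (n+1), (X⟦(1:ℤ)⟧ : C) ∈ M n

variable (C)

/-- A chain of morphisms indexed by `ℕ`. -/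
structure Chain where
  X : ℕ → C
  f : ∀ n : ℕ, X n ⟶ X (n+1)

/-- `Z` is a cone of `f : A ⟶ B`. -/
def IsConeOf {A B : C} (Z : C) (f : A ⟶ B) : Prop :=
  ∃ (g : B ⟶ Z) (h : Z ⟶ (A⟦(1:ℤ)⟧ : C)), Triangle.mk f g h ∈ distTriang C

variable {C}

/-- Cauchy sequence with respect to a (good) metric `M`. -/
def Chain.IsCauchy (c : Chain C) (M : ℕ → Set C) : Prop :=
  ∀ i : ℕ, ∃ N : ℕ, ∀ j : ℕ, N ≤ j → ∃ Z : C, IsConeOf C Z (c.f j) ∧ Z ∈ M i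


section Aux

variable {C : Type u} [Category.{v} C] [HasZeroObject C] [HasShift C ℤ]
  [Preadditive C] [∀ n : ℤ, (shiftFunctor C n).Additive] [Pretriangulated C]

lemma isDirSum_shift {Z X Y : C} (k : ℤ) (h : IsDirSum Z X Y) :
    IsDirSum ((Z⟦k⟧ : C)) (X⟦k⟧) (Y⟦k⟧) := by
  obtain ⟨i₁, i₂, p₁, p₂, h1, h2, h3, h4, h5⟩ := h
  refine ⟨i₁⟦k⟧', i₂⟦k⟧', p₁⟦k⟧', p₂⟦k⟧', ?_, ?_, ?_, ?_, ?_⟩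
  · rw [← Functor.map_comp, h1, CategoryTheory.Functor.map_id]
  · rw [← Functor.map_comp, h2, CategoryTheory.Functor.map_id]
  · rw [← Functor.map_comp, h3, Functor.map_zero]
  · rw [← Functor.map_comp, h4, Functor.map_zero]
  · rw [← Functor.map_comp, ← Functor.map_comp, ← Functor.map_add, h5, CategoryTheory.Functor.map_id]

lemma isDirSum_of_iso {Z X X' Y : C} (e : X ≅ X') (h : IsDirSum Z X' Y) :
    IsDirSum Z X Y := by
  obtain ⟨i₁, i₂, p₁, p₂, h1, h2, h3, h4, h5⟩ := h
  refine ⟨e.hom ≫ i₁, i₂, p₁ ≫ e.inv, p₂, ?_, h2, ?_, ?_, ?_⟩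
  · rw [Category.assoc, ← Category.assoc i₁, h1, Category.id_comp, e.hom_inv_id]
  · rw [Category.assoc, h3, Limits.comp_zero]
  · rw [← Category.assoc, h4, Limits.zero_comp]
  · calc (p₁ ≫ e.inv) ≫ e.hom ≫ i₁ + p₂ ≫ i₂
        = p₁ ≫ (e.inv ≫ e.hom) ≫ i₁ + p₂ ≫ i₂ := by simp only [Category.assoc]
      _ = 𝟙 Z := by rw [e.inv_hom_id, Category.id_comp, h5]

lemma addClos_mono {A B : Set C} (hAB : A ⊆ B) {X : C} (h : addClos C A X) :
    addClos C B X := by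
  induction h with
  | of e hY => exact addClos.of e (hAB hY)
  | zero hX => exact addClos.zero hX
  | dirSum hX hY h ihX ihY => exact addClos.dirSum ihX ihY h

lemma star_mono {A A' B B' : Set C} (hA : A ⊆ A') (hB : B ⊆ B') :
    star C A B ⊆ star C A' B' := by
  rintro Z ⟨X, Y, f, g, h, hX, hY, hdist⟩
  exact ⟨X, Y, f, g, h, hA hX, hB hY, hdist⟩

lemma coprodN_mono {A B : Set C} (hAB : A ⊆ B) :
    ∀ n : ℕ, coprodN C A n ⊆ coprodN C B n := by
  intro n
  induction n with
  | zero => exact fun X hX => hX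
  | succ n ih =>
    match n, ih with
    | 0, _ => exact fun X hX => addClos_mono hAB hX
    | (n+1), ih =>
      exact star_mono (fun X hX => addClos_mono hAB hX) ih

lemma gen_mono {G : C} {I J : Set ℤ} (hIJ : I ⊆ J) {X : C} (h : X ∈ gen C G I) :
    X ∈ gen C G J := by
  obtain ⟨n, Z, W, hZ, hds⟩ := h
  have hshifts : shiftsOf C G I ⊆ shiftsOf C G J := by
    rintro X ⟨i, hi, ⟨e⟩⟩
    exact ⟨i, hIJ hi, ⟨e⟩⟩
  exact ⟨n, Z, W, coprodN_mono hshifts _ hZ, hds⟩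

lemma gen_iso {G : C} {I : Set ℤ} {X Y : C} (e : X ≅ Y) (h : Y ∈ gen C G I) :
    X ∈ gen C G I := by
  obtain ⟨n, Z, W, hZ, hds⟩ := h
  exact ⟨n, Z, W, hZ, isDirSum_of_iso e hds⟩

lemma shiftsOf_univ_shift {G : C} (k : ℤ) {X : C}
    (h : X ∈ shiftsOf C G Set.univ) : (X⟦k⟧ : C) ∈ shiftsOf C G Set.univ := by
  obtain ⟨i, -, ⟨e⟩⟩ := h
  refine ⟨i - k, trivial, ⟨(shiftFunctor C k).mapIso e ≪≫
    ((shiftFunctorAdd' C (-i) k (-(i - k)) (by ring)).app G).symm⟩⟩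

lemma addClos_shift {A : Set C} (hA : ∀ k : ℤ, ∀ X ∈ A, (X⟦k⟧ : C) ∈ A) (k : ℤ)
    {X : C} (h : addClos C A X) : addClos C A ((X⟦k⟧ : C)) := by
  induction h with
  | of e hY => exact addClos.of ((shiftFunctor C k).mapIso e) (hA k _ hY)
  | zero hX => exact addClos.zero ((shiftFunctor C k).map_isZero hX)
  | dirSum hX hY h ihX ihY => exact addClos.dirSum ihX ihY (isDirSum_shift k h)

lemma coprodN_shift {A : Set C} (hA : ∀ k : ℤ, ∀ X ∈ A, (X⟦k⟧ : C) ∈ A) (k : ℤ) :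
    ∀ n : ℕ, ∀ X ∈ coprodN C A n, (X⟦k⟧ : C) ∈ coprodN C A n := by
  intro n
  induction n with
  | zero => exact fun X hX => (shiftFunctor C k).map_isZero hX
  | succ n ih =>
    match n, ih with
    | 0, _ => exact fun X hX => addClos_shift hA k hX
    | (n+1), ih =>
      rintro Z ⟨X, Y, f, g, h, hX, hY, hdist⟩
      refine ⟨X⟦k⟧, Y⟦k⟧, ((Triangle.shiftFunctor C k).obj (Triangle.mk f g h)).mor₁,
        ((Triangle.shiftFunctor C k).obj (Triangle.mk f g h)).mor₂,
        ((Triangle.shiftFunctor C k).obj (Triangle.mk f g h)).mor₃,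
        addClos_shift hA k hX, ih Y hY, ?_⟩
      exact Pretriangulated.Triangle.shift_distinguished _ hdist k

lemma gen_univ_shift {G : C} (k : ℤ) {X : C} (h : X ∈ gen C G Set.univ) :
    (X⟦k⟧ : C) ∈ gen C G Set.univ := by
  obtain ⟨n, Z, W, hZ, hds⟩ := h
  exact ⟨n, Z⟦k⟧, W⟦k⟧,
    coprodN_shift (fun k X hX => shiftsOf_univ_shift k hX) k _ _ hZ,
    isDirSum_shift k hds⟩

lemma hom_zero_of_le_of_ge (T : TStructure C) {Y G : C} (hY : Y ∈ T.ge) {a : ℤ}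
    (ha : (G⟦a⟧ : C) ∈ T.le) {i : ℤ} (hi : a + 1 ≤ i) (f : (G⟦i⟧ : C) ⟶ Y) :
    f = 0 := by
  have hle : ∀ t : ℕ, (G⟦a + (t : ℤ)⟧ : C) ∈ T.le := by
    intro t
    induction t with
    | zero =>
      exact T.le_iso (eqToIso (by norm_num)) ha
    | succ t iht =>
      refine T.le_iso (((shiftFunctorAdd' C (a + (t : ℤ)) 1 (a + ((t + 1 : ℕ) : ℤ))
        (by push_cast; ring)).app G).symm) (T.le_shift _ iht)
  set t : ℕ := (i - a - 1).toNat with ht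
  have hia : i = (a + (t : ℤ)) + 1 := by
    simp only [ht]
    omega
  have hz := T.hom_zero _ (hle t) Y hY
  have e : ((G⟦a + (t : ℤ)⟧ : C)⟦(1:ℤ)⟧ : C) ≅ (G⟦i⟧ : C) :=
    ((shiftFunctorAdd' C (a + (t : ℤ)) 1 i (by omega)).app G).symm
  have : e.hom ≫ f = 0 := hz _
  calc f = e.inv ≫ (e.hom ≫ f) := by rw [← Category.assoc, e.inv_hom_id, Category.id_comp]
    _ = 0 := by rw [this, Limits.comp_zero]

lemma perp_of_ge (T : TStructure C) (hTa : T.BoundedAbove) {Y : C} (hY : Y ∈ T.ge)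
    (G : C) : ∃ k : ℕ, ((Y⟦-(k : ℤ)⟧ : C)) ∈ rPerpShifts C G (Set.Iic (-1)) := by
  obtain ⟨n, hn⟩ := hTa G
  refine ⟨n, fun i hi f => ?_⟩
  have hi' : i ≤ -1 := hi
  -- transport `f : G⟦-i⟧ ⟶ Y⟦-n⟧` to a map `G⟦-i + n⟧ ⟶ Y`
  have e1 : (G⟦-i + (n : ℤ)⟧ : C) ≅ ((G⟦-i⟧ : C)⟦(n : ℤ)⟧ : C) :=
    (shiftFunctorAdd' C (-i) (n : ℤ) (-i + n) rfl).app G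
  have e2 : ((Y⟦-(n : ℤ)⟧ : C)⟦(n : ℤ)⟧ : C) ≅ Y :=
    (shiftFunctorCompIsoId C (-(n : ℤ)) (n : ℤ) (by ring)).app Y
  have hg : e1.hom ≫ f⟦(n : ℤ)⟧' ≫ e2.hom = 0 := by
    refine hom_zero_of_le_of_ge T hY hn ?_ _
    omega
  have hmap : f⟦(n : ℤ)⟧' = 0 := by
    have : f⟦(n : ℤ)⟧' = e1.inv ≫ (e1.hom ≫ f⟦(n : ℤ)⟧' ≫ e2.hom) ≫ e2.inv := by
      simp
    rw [this, hg, Limits.zero_comp, Limits.comp_zero]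
  exact (shiftFunctor C (n : ℤ)).map_injective (by rw [hmap, Functor.map_zero])

end Aux

/-- If `𝒮` admits a bounded t-structure and `fd(𝒮, G) < ∞`, then `G` is
a classical generator of `𝒮`, i.e. `𝒮 = ⟨G⟩`. -/
theorem classical_generator_of_fd_finite
    (C : Type u) [Category.{v} C] [HasZeroObject C] [HasShift C ℤ]
    [Preadditive C] [∀ n : ℤ, (shiftFunctor C n).Additive] [Pretriangulated C]
    (T : TStructure C) (hT : T.Bounded) (G : C) (hG : ∃ m : ℕ, fdLE C G (m : ℤ)) :
    ∀ X : C, X ∈ gen C G Set.univ := by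
  intro X
  obtain ⟨m, hm⟩ := hG
  obtain ⟨n, hn⟩ := hT.2 X
  obtain ⟨k, hk⟩ := perp_of_ge T hT.1 hn G
  have h1 : ((X⟦-(n : ℤ)⟧ : C)⟦-(k : ℤ)⟧ : C) ∈ gen C G (Set.Ici (-(m : ℤ))) :=
    hm _ hk
  have h2 : ((X⟦-(n : ℤ)⟧ : C)⟦-(k : ℤ)⟧ : C) ∈ gen C G Set.univ :=
    gen_mono (Set.subset_univ _) h1
  have h3 : (((X⟦-(n : ℤ)⟧ : C)⟦-(k : ℤ)⟧ : C)⟦(n : ℤ) + (k : ℤ)⟧ : C) ∈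
      gen C G Set.univ := gen_univ_shift _ h2
  refine gen_iso ?_ h3
  calc X ≅ (X⟦(0 : ℤ)⟧ : C) := ((shiftFunctorZero C ℤ).app X).symm
    _ ≅ (X⟦(-(n : ℤ) + -(k : ℤ)) + ((n : ℤ) + (k : ℤ))⟧ : C) :=
        eqToIso (by congr 1; ring)
    _ ≅ ((X⟦-(n : ℤ) + -(k : ℤ)⟧ : C)⟦(n : ℤ) + (k : ℤ)⟧ : C) :=
        (shiftFunctorAdd' C (-(n : ℤ) + -(k : ℤ)) ((n : ℤ) + (k : ℤ)) _ rfl).app X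
    _ ≅ (((X⟦-(n : ℤ)⟧ : C)⟦-(k : ℤ)⟧ : C)⟦(n : ℤ) + (k : ℤ)⟧ : C) :=
        (shiftFunctor C ((n : ℤ) + (k : ℤ))).mapIso
          ((shiftFunctorAdd' C (-(n : ℤ)) (-(k : ℤ)) _ rfl).app X)

end Paper
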